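/- Let α ∈ ℝ, v₁ < v₂, and let r, f : [v₁,v₂] → ℝ be C¹ functions with r(v) > 0 and λ(v) := r'(v) > 0 for all v ∈ [v₁,v₂]. Then the Hardy-type identity ((α+1)²/4) ∫_{v₁}^{v₂} r^α f² λ dv + ∫_{v₁}^{v₂} (r^α/λ) (r f' + ((α+1)/2) λ f)² dv = ∫_{v₁}^{v₂} (r^{α+2}/λ) (f')² dv + ((α+1)/2) (r^{α+1} f²)(v₂) − ((α+1)/2) (r^{α+1} f²)(v₁) holds. -/

import Mathlib

open MeasureTheory intervalIntegral

/-- The Hardy-type identity along outgoing null segments: for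
`C¹` functions `r, f` on `[v₁, v₂]` with `r > 0` and `λ = r' > 0`,
`((α+1)²/4) ∫ r^α f² λ dv + ∫ (r^α/λ) (r f' + ((α+1)/2) λ f)² dv
 = ∫ (r^(α+2)/λ) (f')² dv + ((α+1)/2)(r^(α+1) f²)(v₂) - ((α+1)/2)(r^(α+1) f²)(v₁)`. -/
theorem hardy_identity_infinity
    (α v₁ v₂ : ℝ) (h12 : v₁ < v₂) (r r' f f' : ℝ → ℝ)
    (hr : ∀ v ∈ Set.Icc v₁ v₂, HasDerivWithinAt r (r' v) (Set.Icc v₁ v₂) v)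
    (hf : ∀ v ∈ Set.Icc v₁ v₂, HasDerivWithinAt f (f' v) (Set.Icc v₁ v₂) v)
    (hr' : ContinuousOn r' (Set.Icc v₁ v₂))
    (hf' : ContinuousOn f' (Set.Icc v₁ v₂))
    (hpos : ∀ v ∈ Set.Icc v₁ v₂, 0 < r v)
    (hlam : ∀ v ∈ Set.Icc v₁ v₂, 0 < r' v) :
    (α + 1) ^ 2 / 4 * (∫ v in v₁..v₂, r v ^ α * f v ^ 2 * r' v)
      + (∫ v in v₁..v₂,
          r v ^ α / r' v * (r v * f' v + (α + 1) / 2 * r' v * f v) ^ 2)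
    = (∫ v in v₁..v₂, r v ^ (α + 2) / r' v * f' v ^ 2)
      + (α + 1) / 2 * (r v₂ ^ (α + 1) * f v₂ ^ 2)
      - (α + 1) / 2 * (r v₁ ^ (α + 1) * f v₁ ^ 2) := by
  have hle := h12.le
  have hIcc : Set.uIcc v₁ v₂ = Set.Icc v₁ v₂ := Set.uIcc_of_le hle
  have hrc : ContinuousOn r (Set.Icc v₁ v₂) := fun v hv => (hr v hv).continuousWithinAt
  have hfc : ContinuousOn f (Set.Icc v₁ v₂) := fun v hv => (hf v hv).continuousWithinAt
  have hrne : ∀ v ∈ Set.Icc v₁ v₂, r v ≠ 0 := fun v hv => (hpos v hv).ne'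
  have hlne : ∀ v ∈ Set.Icc v₁ v₂, r' v ≠ 0 := fun v hv => (hlam v hv).ne'
  have hrpow : ∀ β : ℝ, ContinuousOn (fun v => r v ^ β) (Set.Icc v₁ v₂) :=
    fun β => hrc.rpow_const fun v hv => Or.inl (hrne v hv)
  -- G and its derivative
  set G : ℝ → ℝ := fun v => r v ^ (α + 1) * f v ^ 2 with hG
  set G' : ℝ → ℝ := fun v => (α + 1) * r v ^ α * r' v * f v ^ 2
      + r v ^ (α + 1) * (2 * f v * f' v) with hG'
  have hGd : ∀ v ∈ Set.Icc v₁ v₂, HasDerivWithinAt G (G' v) (Set.Icc v₁ v₂) v := by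
    intro v hv
    have h1 : HasDerivWithinAt (fun v => r v ^ (α + 1))
        ((α + 1) * r v ^ α * r' v) (Set.Icc v₁ v₂) v := by
      have h := (hr v hv).rpow_const (p := α + 1) (Or.inl (hrne v hv))
      rw [show α + 1 - 1 = α by ring] at h
      convert h using 1
      ring
    have h2 : HasDerivWithinAt (fun v => f v ^ 2) (2 * f v * f' v) (Set.Icc v₁ v₂) v := by
      have h := (hf v hv).pow 2
      exact h.congr_deriv (by ring)
    exact h1.mul h2
  have hGc : ContinuousOn G (Set.Icc v₁ v₂) := fun v hv => (hGd v hv).continuousWithinAt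
  have hG'c : ContinuousOn G' (Set.Icc v₁ v₂) := by
    apply ContinuousOn.add
    · exact ((continuousOn_const.mul (hrpow α)).mul hr').mul (hfc.pow 2)
    · exact (hrpow (α + 1)).mul ((continuousOn_const.mul hfc).mul hf')
  have hG'i : IntervalIntegrable G' volume v₁ v₂ := by
    apply ContinuousOn.intervalIntegrable; rwa [hIcc]
  have hFTC : (∫ v in v₁..v₂, G' v) = G v₂ - G v₁ := by
    apply intervalIntegral.integral_eq_sub_of_hasDeriv_right_of_le hle hGc _ hG'i
    intro x hx
    exact ((hGd x (Set.mem_Icc_of_Ioo hx)).hasDerivAt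
      (Icc_mem_nhds hx.1 hx.2)).hasDerivWithinAt
  -- the integrands
  set c : ℝ := (α + 1) / 2 with hc
  set I₁ : ℝ → ℝ := fun v => r v ^ α * f v ^ 2 * r' v with hI₁def
  set I₂ : ℝ → ℝ := fun v => r v ^ α / r' v * (r v * f' v + c * r' v * f v) ^ 2 with hI₂def
  set B : ℝ → ℝ := fun v => r v ^ (α + 2) / r' v * f' v ^ 2 with hBdef
  have hkey : ∀ v ∈ Set.Icc v₁ v₂, c ^ 2 * I₁ v + I₂ v = B v + c * G' v := by
    intro v hv
    have e1 : r v ^ (α + 1) = r v ^ α * r v := by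
      rw [Real.rpow_add (hpos v hv), Real.rpow_one]
    have e2 : r v ^ (α + 2) = r v ^ α * r v * r v := by
      rw [show (α + 2 : ℝ) = α + 1 + 1 by ring, Real.rpow_add (hpos v hv),
        Real.rpow_add (hpos v hv), Real.rpow_one]
    simp only [hI₁def, hI₂def, hBdef, hG', e1, e2, hc]
    have hl := hlne v hv
    field_simp
    ring
  -- integrability
  have hI₁i : IntervalIntegrable I₁ volume v₁ v₂ := by
    apply ContinuousOn.intervalIntegrable; rw [hIcc]
    exact ((hrpow α).mul (hfc.pow 2)).mul hr'
  have hI₂i : IntervalIntegrable I₂ volume v₁ v₂ := by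
    apply ContinuousOn.intervalIntegrable; rw [hIcc]
    exact ((hrpow α).div hr' hlne).mul
      (((hrc.mul hf').add ((continuousOn_const.mul hr').mul hfc)).pow 2)
  have hBi : IntervalIntegrable B volume v₁ v₂ := by
    apply ContinuousOn.intervalIntegrable; rw [hIcc]
    exact ((hrpow (α + 2)).div hr' hlne).mul (hf'.pow 2)
  have main : c ^ 2 * (∫ v in v₁..v₂, I₁ v) + (∫ v in v₁..v₂, I₂ v)
      = (∫ v in v₁..v₂, B v) + c * (G v₂ - G v₁) := by
    rw [← hFTC, ← intervalIntegral.integral_const_mul, ← intervalIntegral.integral_const_mul,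
      ← intervalIntegral.integral_add (hI₁i.const_mul _) hI₂i,
      ← intervalIntegral.integral_add hBi (hG'i.const_mul _)]
    apply intervalIntegral.integral_congr
    intro v hv
    exact hkey v (hIcc ▸ hv)
  have hc2 : (α + 1) ^ 2 / 4 = c ^ 2 := by rw [hc]; ring
  rw [hc2]
  have : c * (G v₂ - G v₁) = c * (r v₂ ^ (α + 1) * f v₂ ^ 2) - c * (r v₁ ^ (α + 1) * f v₁ ^ 2) := by
    simp [hG]; ring
  linarith [main, this]
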